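/- For every n ∈ ℕ and every real ξ > 0, ∫_{−1}^{1} Pₙ(s)/√(cosh ξ − s) ds = (2√2/(2n+1)) · e^{−(n+1/2)ξ}. -/

import Mathlib

open Polynomial

/-- The degree-`n` Legendre polynomial, via Rodrigues' formula. -/
noncomputable def legendreP (n : ℕ) (s : ℝ) : ℝ :=
  (1 : ℝ) / (2 ^ n * (n.factorial : ℝ)) *
    iteratedDeriv n (fun x : ℝ => (x ^ 2 - 1) ^ n) s

namespace LegAux

noncomputable def P (n : ℕ) : ℝ[X] :=
  C ((2 ^ n * (n.factorial : ℝ))⁻¹) * derivative^[n] (((X : ℝ[X]) ^ 2 - 1) ^ n)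

lemma iterD_X_mul (k : ℕ) (p : ℝ[X]) :
    derivative^[k + 1] (X * p) =
      X * derivative^[k + 1] p + ((k : ℝ[X]) + 1) * derivative^[k] p := by
  induction k generalizing p with
  | zero => simp [derivative_mul]; ring
  | succ k ih =>
      rw [Function.iterate_succ_apply' derivative (k+1) (X*p), ih,
        Function.iterate_succ_apply' derivative (k+1) p]
      simp only [derivative_add, derivative_mul, derivative_X, derivative_natCast, one_mul,
        zero_mul, derivative_one, derivative_ofNat,
        Function.iterate_succ_apply' derivative k p]
      push_cast
      ring

lemma const_rel (n : ℕ) :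
    ((2:ℝ) * ((n:ℝ) + 1)) * (2 ^ (n+1) * ((n+1).factorial : ℝ))⁻¹
      = (2 ^ n * (n.factorial : ℝ))⁻¹ := by
  rw [Nat.factorial_succ]
  have h1 : (2:ℝ) ^ n * (n.factorial : ℝ) ≠ 0 := by positivity
  have h2 : (2:ℝ) ^ (n+1) * (((n+1) * n.factorial : ℕ) : ℝ) ≠ 0 := by positivity
  push_cast
  field_simp
  ring

lemma const_relC (n : ℕ) :
    C ((2:ℝ) * ((n:ℝ) + 1)) * C ((2 ^ (n+1) * ((n+1).factorial : ℝ))⁻¹)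
      = C ((2 ^ n * (n.factorial : ℝ))⁻¹) := by
  rw [← C_mul, const_rel]

lemma deriv_V_pow (n : ℕ) :
    derivative ((((X : ℝ[X]) ^ 2 - 1)) ^ (n+1)) =
      C (2 * ((n:ℝ) + 1)) * (X * ((X ^ 2 - 1)) ^ n) := by
  rw [derivative_pow]
  simp only [map_mul, map_add, map_one, map_ofNat, C_eq_natCast]
  have h2 : (C (2:ℝ)) = (2:ℝ[X]) := map_ofNat C 2
  push_cast
  simp [h2]
  ring

lemma L1 (n : ℕ) :
    derivative (P (n+1)) = X * derivative (P n) + ((n : ℝ[X]) + 1) * P n := by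
  unfold P
  rw [derivative_C_mul, derivative_C_mul,
    ← Function.iterate_succ_apply' derivative (n+1) (((X:ℝ[X])^2-1)^(n+1)),
    Function.iterate_succ_apply derivative (n+1), deriv_V_pow,
    iterate_derivative_C_mul, iterD_X_mul,
    Function.iterate_succ_apply' derivative n]
  linear_combination (X * derivative (derivative^[n] (((X:ℝ[X])^2-1)^n))
      + ((n : ℝ[X]) + 1) * derivative^[n] (((X:ℝ[X])^2-1)^n)) * const_relC n


lemma natCast_C (n : ℕ) : C (2 * ((n:ℝ) + 1)) = 2 * ((n : ℝ[X]) + 1) := by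
  simp only [map_mul, map_add, map_one, map_ofNat, C_eq_natCast]

lemma const_relC' (n : ℕ) :
    (2 * ((n : ℝ[X]) + 1)) * C ((2 ^ (n+1) * ((n+1).factorial : ℝ))⁻¹)
      = C ((2 ^ n * (n.factorial : ℝ))⁻¹) := by
  rw [← natCast_C, const_relC]

lemma iterD_add (k : ℕ) (p q : ℝ[X]) :
    derivative^[k] (p + q) = derivative^[k] p + derivative^[k] q := by
  induction k generalizing p q with
  | zero => rfl
  | succ k ih => rw [Function.iterate_succ_apply, derivative_add, ih,
      Function.iterate_succ_apply, Function.iterate_succ_apply]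

lemma L2 (n : ℕ) :
    X * derivative (P (n+1)) = ((n : ℝ[X]) + 1) * P (n+1) + derivative (P n) := by
  unfold P
  rw [derivative_C_mul, derivative_C_mul]
  have e1 : derivative (derivative^[n+1] (((X:ℝ[X])^2-1)^(n+1)))
      = derivative^[n+1] (derivative (((X:ℝ[X])^2-1)^(n+1))) := by
    rw [← Function.iterate_succ_apply' derivative (n+1), Function.iterate_succ_apply]
  have e2 : derivative (derivative^[n] (((X:ℝ[X])^2-1)^n))
      = derivative^[n+1] (((X:ℝ[X])^2-1)^n) :=
    (Function.iterate_succ_apply' derivative n _).symm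
  rw [e1, e2]
  have h1 := iterD_X_mul n (derivative (((X:ℝ[X])^2-1)^(n+1)))
  have h2 : (X:ℝ[X]) * derivative (((X:ℝ[X])^2-1)^(n+1))
      = C (2*((n:ℝ)+1)) * (((X:ℝ[X])^2-1)^(n+1) + ((X:ℝ[X])^2-1)^n) := by
    rw [deriv_V_pow]; ring
  have h4 : derivative^[n+1] ((X:ℝ[X]) * derivative (((X:ℝ[X])^2-1)^(n+1)))
      = C (2*((n:ℝ)+1)) * (derivative^[n+1] (((X:ℝ[X])^2-1)^(n+1))
          + derivative^[n+1] (((X:ℝ[X])^2-1)^n)) := by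
    rw [h2, iterate_derivative_C_mul, iterD_add]
  have h5 : derivative^[n] (derivative (((X:ℝ[X])^2-1)^(n+1)))
      = derivative^[n+1] (((X:ℝ[X])^2-1)^(n+1)) :=
    (Function.iterate_succ_apply derivative n _).symm
  have h3 : X * derivative^[n+1] (derivative (((X:ℝ[X])^2-1)^(n+1)))
      = C (2*((n:ℝ)+1)) * (derivative^[n+1] (((X:ℝ[X])^2-1)^(n+1))
          + derivative^[n+1] (((X:ℝ[X])^2-1)^n))
        - ((n:ℝ[X])+1) * derivative^[n+1] (((X:ℝ[X])^2-1)^(n+1)) := by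
    linear_combination h4 - h1 - ((n:ℝ[X])+1) * h5
  rw [natCast_C] at h3
  linear_combination (C ((2 ^ (n+1) * ((n+1).factorial : ℝ))⁻¹)) * h3
    + (derivative^[n+1] (((X:ℝ[X])^2-1)^n)) * const_relC' n

lemma L3 (n : ℕ) : ((X:ℝ[X])^2 - 1) * derivative (P (n+1))
    = ((n:ℝ[X])+1) * (X * P (n+1) - P n) := by
  linear_combination X * L2 n - L1 n

lemma bonnet (n : ℕ) : ((n:ℝ[X])+2) * P (n+2)
    = (2*(n:ℝ[X])+3) * (X * P (n+1)) - ((n:ℝ[X])+1) * P n := by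
  refine mul_left_cancel₀ (X_ne_zero (R := ℝ)) ?_
  linear_combination (norm := (push_cast; ring1))
    (-(1:ℝ[X])) * L3 (n+1) + ((X:ℝ[X])^2-1) * L1 (n+1) + X * L3 n

lemma L5 (n : ℕ) : derivative (P (n+2))
    = derivative (P n) + (2*(n:ℝ[X])+3) * P (n+1) := by
  linear_combination (norm := (push_cast; ring1)) L1 (n+1) + L2 n

lemma P_zero : P 0 = 1 := by unfold P; simp

lemma P_one : P 1 = X := by
  unfold P
  have : derivative (((X:ℝ[X])^2 - 1)^1) = C 2 * X := by
    simp [derivative_X_pow]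
    norm_num [show (C 2 : ℝ[X]) = 2 from map_ofNat C 2]
  simp only [Function.iterate_one, this]
  rw [← mul_assoc, ← C_mul]
  norm_num

lemma evalP_one (n : ℕ) : (P n).eval 1 = 1 := by
  induction n using Nat.twoStepInduction with
  | zero => simp [P_zero]
  | one => simp [P_one]
  | more n ih1 ih2 =>
      have h := congrArg (eval 1) (bonnet n)
      simp only [eval_mul, eval_add, eval_sub, eval_natCast, eval_ofNat, eval_X, Polynomial.eval_one,
        ih1, ih2] at h
      have hne : ((n:ℝ) + 2) ≠ 0 := by positivity
      have : ((n:ℝ)+2) * (P (n+2)).eval 1 = ((n:ℝ)+2) * 1 := by push_cast at h ⊢; linarith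
      exact mul_left_cancel₀ hne this

lemma evalP_negone (n : ℕ) : (P n).eval (-1) = (-1)^n := by
  induction n using Nat.twoStepInduction with
  | zero => simp [P_zero]
  | one => simp [P_one]
  | more n ih1 ih2 =>
      have h := congrArg (eval (-1)) (bonnet n)
      simp only [eval_mul, eval_add, eval_sub, eval_natCast, eval_ofNat, eval_X, Polynomial.eval_one,
        ih1, ih2] at h
      have hne : ((n:ℝ) + 2) ≠ 0 := by positivity
      have : ((n:ℝ)+2) * (P (n+2)).eval (-1) = ((n:ℝ)+2) * (-1)^(n+2) := by
        push_cast at h ⊢; rw [h]; ring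
      exact mul_left_cancel₀ hne this

open Real MeasureTheory intervalIntegral Set

variable {c : ℝ}

noncomputable def w (c s : ℝ) : ℝ := (Real.sqrt (c - s))⁻¹
noncomputable def w3 (c s : ℝ) : ℝ := (Real.sqrt (c - s))⁻¹ * (c - s)⁻¹

lemma uIcc_eq : uIcc (-1 : ℝ) 1 = Icc (-1 : ℝ) 1 := uIcc_of_le (by norm_num)

lemma pos_of_mem (hc : 1 < c) {s : ℝ} (hs : s ∈ uIcc (-1 : ℝ) 1) : 0 < c - s := by
  rw [uIcc_eq] at hs
  have := hs.2
  linarith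

lemma hd_sqrt (hc : 1 < c) {s : ℝ} (hs : s ∈ uIcc (-1 : ℝ) 1) :
    HasDerivAt (fun u => Real.sqrt (c - u)) (-(2 * Real.sqrt (c - s))⁻¹) s := by
  have h0 : 0 < c - s := pos_of_mem hc hs
  have h1 : HasDerivAt (fun u : ℝ => c - u) (-1) s := by
    simpa using (hasDerivAt_id s).const_sub c
  have h2 := (Real.hasDerivAt_sqrt (ne_of_gt h0)).comp s h1
  refine h2.congr_deriv ?_
  ring

lemma hd_w (hc : 1 < c) {s : ℝ} (hs : s ∈ uIcc (-1 : ℝ) 1) :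
    HasDerivAt (w c) (2⁻¹ * w3 c s) s := by
  have h0 : 0 < c - s := pos_of_mem hc hs
  have hsq : 0 < Real.sqrt (c - s) := Real.sqrt_pos.2 h0
  have h := (hd_sqrt hc hs).inv (ne_of_gt hsq)
  refine h.congr_deriv ?_
  unfold w3
  have hr : Real.sqrt (c-s) ^ 2 = c - s := Real.sq_sqrt h0.le
  rw [← hr]
  have : Real.sqrt (c-s) ≠ 0 := ne_of_gt hsq
  field_simp
  simp only [hr]

lemma hd_F1 (hc : 1 < c) {s : ℝ} (hs : s ∈ uIcc (-1 : ℝ) 1) :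
    HasDerivAt (fun u => -2 * Real.sqrt (c - u)) (w c s) s := by
  have h0 : 0 < c - s := pos_of_mem hc hs
  have hsq : 0 < Real.sqrt (c - s) := Real.sqrt_pos.2 h0
  have h := (hd_sqrt hc hs).const_mul (-2 : ℝ)
  refine h.congr_deriv ?_
  unfold w
  field_simp

lemma hd_F3 (hc : 1 < c) {s : ℝ} (hs : s ∈ uIcc (-1 : ℝ) 1) :
    HasDerivAt (fun u => 2 * (Real.sqrt (c - u))⁻¹) (w3 c s) s := by
  have h := (hd_w hc hs).const_mul (2 : ℝ)
  have h2 : (2:ℝ) * (2⁻¹ * w3 c s) = w3 c s := by ring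
  rw [h2] at h
  unfold w at h
  exact h

lemma contOn_w (hc : 1 < c) : ContinuousOn (w c) (uIcc (-1 : ℝ) 1) := by
  intro s hs
  have h0 : 0 < c - s := pos_of_mem hc hs
  have hsq : Real.sqrt (c - s) ≠ 0 := ne_of_gt (Real.sqrt_pos.2 h0)
  exact ((Real.continuous_sqrt.comp (continuous_const.sub continuous_id)).continuousAt.continuousWithinAt.inv₀ hsq)

lemma contOn_w3 (hc : 1 < c) : ContinuousOn (w3 c) (uIcc (-1 : ℝ) 1) := by
  apply (contOn_w hc).mul
  intro s hs
  exact (continuous_const.sub continuous_id).continuousAt.continuousWithinAt.inv₀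
    (ne_of_gt (pos_of_mem hc hs))

lemma intble_w (hc : 1 < c) (q : ℝ[X]) :
    IntervalIntegrable (fun s => q.eval s * w c s) volume (-1 : ℝ) 1 :=
  (q.continuousOn_aeval.mul (contOn_w hc)).intervalIntegrable

lemma intble_w3 (hc : 1 < c) (q : ℝ[X]) :
    IntervalIntegrable (fun s => q.eval s * w3 c s) volume (-1 : ℝ) 1 :=
  ((q.continuous_aeval).continuousOn.mul (contOn_w3 hc)).intervalIntegrable

lemma ibp (hc : 1 < c) (q : ℝ[X]) (h1 : q.eval 1 = 0) (hm1 : q.eval (-1) = 0) :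
    ∫ s in (-1:ℝ)..1, (q.derivative.eval s) * w c s
      = -(2⁻¹ * ∫ s in (-1:ℝ)..1, q.eval s * w3 c s) := by
  have hu : ∀ s ∈ uIcc (-1:ℝ) 1, HasDerivAt (fun u => q.eval u) (q.derivative.eval s) s :=
    fun s _ => q.hasDerivAt s
  have hv : ∀ s ∈ uIcc (-1:ℝ) 1, HasDerivAt (w c) (2⁻¹ * w3 c s) s :=
    fun s hs => hd_w hc hs
  have hint1 : IntervalIntegrable (fun s => q.derivative.eval s) volume (-1:ℝ) 1 :=
    q.derivative.continuous_aeval.intervalIntegrable _ _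
  have hint2 : IntervalIntegrable (fun s => 2⁻¹ * w3 c s) volume (-1:ℝ) 1 := by
    apply ContinuousOn.intervalIntegrable
    exact continuousOn_const.mul (contOn_w3 hc)
  have key := intervalIntegral.integral_mul_deriv_eq_deriv_mul hu hv hint1 hint2
  -- key : ∫ q.eval * (2⁻¹ * w3) = q(1) w(1) - q(-1) w(-1) - ∫ q'.eval * w
  rw [h1, hm1] at key
  simp only [zero_mul, sub_zero, zero_sub] at key
  have e : (∫ s in (-1:ℝ)..1, q.eval s * (2⁻¹ * w3 c s))
      = 2⁻¹ * ∫ s in (-1:ℝ)..1, q.eval s * w3 c s := by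
    rw [← intervalIntegral.integral_const_mul]
    congr 1; funext s; ring
  rw [e] at key
  linarith [key]

lemma int_w (hc : 1 < c) : ∫ s in (-1:ℝ)..1, w c s
    = 2 * Real.sqrt (c+1) - 2 * Real.sqrt (c-1) := by
  have h := intervalIntegral.integral_eq_sub_of_hasDerivAt
    (f := fun u => -2 * Real.sqrt (c - u)) (f' := w c)
    (fun s hs => hd_F1 hc hs) ((contOn_w hc).intervalIntegrable)
  rw [h]
  norm_num
  ring

lemma int_w3 (hc : 1 < c) : ∫ s in (-1:ℝ)..1, w3 c s
    = 2 * (Real.sqrt (c-1))⁻¹ - 2 * (Real.sqrt (c+1))⁻¹ := by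
  have h := intervalIntegral.integral_eq_sub_of_hasDerivAt
    (f := fun u => 2 * (Real.sqrt (c - u))⁻¹) (f' := w3 c)
    (fun s hs => hd_F3 hc hs) ((contOn_w3 hc).intervalIntegrable)
  rw [h]
  norm_num

lemma int_s_w3 (hc : 1 < c) : ∫ s in (-1:ℝ)..1, s * w3 c s
    = (2*c*(Real.sqrt (c-1))⁻¹ + 2*Real.sqrt (c-1))
      - (2*c*(Real.sqrt (c+1))⁻¹ + 2*Real.sqrt (c+1)) := by
  have hderiv : ∀ s ∈ uIcc (-1:ℝ) 1,
      HasDerivAt (fun u => 2*c*(Real.sqrt (c - u))⁻¹ + 2*Real.sqrt (c - u))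
        (s * w3 c s) s := by
    intro s hs
    have h0 : 0 < c - s := pos_of_mem hc hs
    have h1 := ((hd_w hc hs).const_mul (2*c)).sub (hd_F1 hc hs)
    have e : 2*c*(2⁻¹ * w3 c s) - w c s = s * w3 c s := by
      unfold w w3
      have hsq : Real.sqrt (c - s) ≠ 0 := ne_of_gt (Real.sqrt_pos.2 h0)
      have hr : Real.sqrt (c-s) ^ 2 = c - s := Real.sq_sqrt h0.le
      rw [← hr]
      field_simp
      rw [hr]
      ring
    rw [e] at h1
    have ef : (fun u => 2*c * w c u - (-2 * Real.sqrt (c-u)))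
        = (fun u => 2*c*(Real.sqrt (c - u))⁻¹ + 2*Real.sqrt (c - u)) := by
      unfold w; funext u; ring
    rw [← ef]
    exact h1
  have hint : IntervalIntegrable (fun s => s * w3 c s) volume (-1:ℝ) 1 :=
    (continuousOn_id.mul (contOn_w3 hc)).intervalIntegrable
  have h := intervalIntegral.integral_eq_sub_of_hasDerivAt hderiv hint
  rw [h]
  norm_num

noncomputable def II (c : ℝ) (n : ℕ) : ℝ := ∫ s in (-1:ℝ)..1, (P n).eval s * w c s
noncomputable def JJ (c : ℝ) (n : ℕ) : ℝ := ∫ s in (-1:ℝ)..1, (P n).eval s * w3 c s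

lemma diamond (hc : 1 < c) (n : ℕ) :
    (2*(n:ℝ)+3) * II c (n+1) = 2⁻¹ * (JJ c n - JJ c (n+2)) := by
  set q : ℝ[X] := P (n+2) - P n with hqdef
  have hq : derivative q = (2*(n:ℝ[X])+3) * P (n+1) := by
    rw [hqdef, derivative_sub]
    linear_combination L5 n
  have h1 : q.eval 1 = 0 := by simp [hqdef, evalP_one]
  have hm1 : q.eval (-1) = 0 := by simp [hqdef, evalP_negone, pow_succ]
  have key := ibp hc q h1 hm1
  have e1 : (fun s => (q.derivative.eval s) * w c s)
      = fun s => (2*(n:ℝ)+3) * ((P (n+1)).eval s * w c s) := by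
    funext s
    rw [hq]
    simp only [eval_mul, eval_add, eval_ofNat, eval_natCast, eval_mul, eval_X]
    push_cast
    ring
  have e2 : (fun s => q.eval s * w3 c s)
      = fun s => (P (n+2)).eval s * w3 c s - (P n).eval s * w3 c s := by
    funext s
    rw [hqdef]
    simp only [eval_sub]
    ring
  rw [e1, e2, intervalIntegral.integral_const_mul,
    intervalIntegral.integral_sub (intble_w3 hc _) (intble_w3 hc _)] at key
  unfold II JJ
  rw [key]
  ring

lemma star' (hc : 1 < c) (n : ℕ) :
    (2*(n:ℝ)+3) * II c (n+1)
      = (2*(n:ℝ)+3) * (c * JJ c (n+1))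
        - (((n:ℝ)+2) * JJ c (n+2) + ((n:ℝ)+1) * JJ c n) := by
  have e3 : (fun s => s * ((P (n+1)).eval s * w3 c s))
      = fun s => ((X * P (n+1)).eval s * w3 c s) := by
    funext s; simp only [eval_mul, eval_X]; ring
  have hcongr : EqOn (fun s => (P (n+1)).eval s * w c s)
      (fun s => c * ((P (n+1)).eval s * w3 c s) - s * ((P (n+1)).eval s * w3 c s))
      (uIcc (-1:ℝ) 1) := by
    intro s hs
    have h0 : 0 < c - s := pos_of_mem hc hs
    simp only
    unfold w w3
    have hsq : Real.sqrt (c - s) ≠ 0 := ne_of_gt (Real.sqrt_pos.2 h0)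
    field_simp
  have hi1 : IntervalIntegrable (fun s => c * ((P (n+1)).eval s * w3 c s)) volume (-1:ℝ) 1 :=
    (intble_w3 hc _).const_mul c
  have hi2 : IntervalIntegrable (fun s => s * ((P (n+1)).eval s * w3 c s)) volume (-1:ℝ) 1 := by
    rw [e3]; exact intble_w3 hc _
  have hsplit : II c (n+1) = c * JJ c (n+1)
      - ∫ s in (-1:ℝ)..1, (X * P (n+1)).eval s * w3 c s := by
    unfold II JJ
    rw [intervalIntegral.integral_congr hcongr,
      intervalIntegral.integral_sub hi1 hi2, intervalIntegral.integral_const_mul, e3]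
  have hbon : (2*(n:ℝ)+3) * ∫ s in (-1:ℝ)..1, (X * P (n+1)).eval s * w3 c s
      = ((n:ℝ)+2) * JJ c (n+2) + ((n:ℝ)+1) * JJ c n := by
    unfold JJ
    rw [← intervalIntegral.integral_const_mul]
    rw [show (((n:ℝ)+2) * ∫ s in (-1:ℝ)..1, (P (n+2)).eval s * w3 c s)
        = ∫ s in (-1:ℝ)..1, ((n:ℝ)+2) * ((P (n+2)).eval s * w3 c s) from
      (intervalIntegral.integral_const_mul _ _).symm]
    rw [show (((n:ℝ)+1) * ∫ s in (-1:ℝ)..1, (P n).eval s * w3 c s)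
        = ∫ s in (-1:ℝ)..1, ((n:ℝ)+1) * ((P n).eval s * w3 c s) from
      (intervalIntegral.integral_const_mul _ _).symm]
    rw [← intervalIntegral.integral_add ((intble_w3 hc _).const_mul _)
      ((intble_w3 hc _).const_mul _)]
    apply intervalIntegral.integral_congr
    intro s _
    simp only
    have hbe := congrArg (eval s) (bonnet n)
    simp only [eval_mul, eval_add, eval_sub, eval_natCast, eval_ofNat, eval_X,
      Polynomial.eval_one] at hbe
    push_cast at hbe ⊢
    simp only [eval_mul, eval_X]
    linear_combination (-(w3 c s)) * hbe
  linear_combination (2*(n:ℝ)+3) * hsplit - hbon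

lemma Jrec (hc : 1 < c) (n : ℕ) : JJ c (n+2) = 2*c*JJ c (n+1) - JJ c n := by
  have hne : (2*(n:ℝ)+3) ≠ 0 := by positivity
  refine mul_left_cancel₀ hne ?_
  linear_combination 2 * star' hc n - 2 * diamond hc n

lemma cosh_half (ξ : ℝ) : Real.cosh ξ = Real.cosh (ξ/2)^2 + Real.sinh (ξ/2)^2 := by
  have := Real.cosh_two_mul (ξ/2)
  rw [show 2*(ξ/2) = ξ by ring] at this
  exact this

lemma sinh_half (ξ : ℝ) : Real.sinh ξ = 2 * Real.sinh (ξ/2) * Real.cosh (ξ/2) := by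
  have := Real.sinh_two_mul (ξ/2)
  rw [show 2*(ξ/2) = ξ by ring] at this
  exact this

lemma sqrt_c_add (ξ : ℝ) (hξ : 0 < ξ) :
    Real.sqrt (Real.cosh ξ + 1) = Real.sqrt 2 * Real.cosh (ξ/2) := by
  have h1 : Real.cosh ξ + 1 = 2 * Real.cosh (ξ/2)^2 := by
    rw [cosh_half ξ, Real.cosh_sq (ξ/2)]; ring
  rw [h1, Real.sqrt_mul (by norm_num : (0:ℝ) ≤ 2),
    Real.sqrt_sq (Real.cosh_pos _).le]

lemma sqrt_c_sub (ξ : ℝ) (hξ : 0 < ξ) :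
    Real.sqrt (Real.cosh ξ - 1) = Real.sqrt 2 * Real.sinh (ξ/2) := by
  have h1 : Real.cosh ξ - 1 = 2 * Real.sinh (ξ/2)^2 := by
    rw [cosh_half ξ, Real.cosh_sq (ξ/2)]; ring
  rw [h1, Real.sqrt_mul (by norm_num : (0:ℝ) ≤ 2),
    Real.sqrt_sq (Real.sinh_nonneg_iff.2 (by linarith))]

lemma algJ0 (sh ch r : ℝ) (hsh : sh ≠ 0) (hch : ch ≠ 0) (hr : r * r = 2) :
    2*(r*sh)⁻¹ - 2*(r*ch)⁻¹ = 2*r*(ch - sh)/(2*sh*ch) := by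
  have hrne : r ≠ 0 := by intro h; rw [h] at hr; norm_num at hr
  field_simp
  linear_combination (sh - ch) * hr

lemma algJ1 (sh ch r : ℝ) (hsh : sh ≠ 0) (hch : ch ≠ 0) (hr : r * r = 2) :
    (2*(ch^2+sh^2)*(r*sh)⁻¹ + 2*(r*sh)) - (2*(ch^2+sh^2)*(r*ch)⁻¹ + 2*(r*ch))
      = 2*r*(ch - sh)^3/(2*sh*ch) := by
  have hrne : r ≠ 0 := by intro h; rw [h] at hr; norm_num at hr
  field_simp
  linear_combination (-(ch*sh^2 - ch^2*sh + ch^3 - sh^3)) * hr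

lemma Jval (ξ : ℝ) (hξ : 0 < ξ) (n : ℕ) :
    JJ (Real.cosh ξ) n = 2 * Real.sqrt 2 * Real.exp (-((n:ℝ)+1/2)*ξ) / Real.sinh ξ := by
  have hc : 1 < Real.cosh ξ := by
    rw [Real.one_lt_cosh]; exact ne_of_gt hξ
  have hsh : 0 < Real.sinh (ξ/2) := by rw [Real.sinh_pos_iff]; linarith
  have hch : 0 < Real.cosh (ξ/2) := Real.cosh_pos _
  have hexp : Real.exp (-(ξ/2)) = Real.cosh (ξ/2) - Real.sinh (ξ/2) :=
    (Real.cosh_sub_sinh (ξ/2)).symm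
  have h2 : Real.sqrt 2 * Real.sqrt 2 = 2 := Real.mul_self_sqrt (by norm_num)
  induction n using Nat.twoStepInduction with
  | zero =>
      have e : (fun s => (P 0).eval s * w3 (Real.cosh ξ) s) = w3 (Real.cosh ξ) := by
        funext s; simp [P_zero]
      unfold JJ
      rw [e, int_w3 hc, sqrt_c_add ξ hξ, sqrt_c_sub ξ hξ,
        show -(((0:ℕ):ℝ)+1/2)*ξ = -(ξ/2) by push_cast; ring, hexp, sinh_half ξ]
      exact algJ0 _ _ _ (ne_of_gt hsh) (ne_of_gt hch) h2
  | one =>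
      have e : (fun s => (P 1).eval s * w3 (Real.cosh ξ) s)
          = fun s => s * w3 (Real.cosh ξ) s := by
        funext s; simp [P_one]
      unfold JJ
      rw [e, int_s_w3 hc, sqrt_c_add ξ hξ, sqrt_c_sub ξ hξ,
        show -(((1:ℕ):ℝ)+1/2)*ξ = (3:ℕ) * (-(ξ/2)) by push_cast; ring,
        Real.exp_nat_mul, hexp, sinh_half ξ, cosh_half ξ]
      exact algJ1 _ _ _ (ne_of_gt hsh) (ne_of_gt hch) h2
  | more n ih1 ih2 =>
      have hE : (0:ℝ) < Real.exp ξ := Real.exp_pos ξ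
      have hS : 0 < Real.sinh ξ := by rw [Real.sinh_pos_iff]; exact hξ
      have hE1 : Real.exp (-(((n+1:ℕ):ℝ)+1/2)*ξ)
          = Real.exp (-((n:ℝ)+1/2)*ξ) * (Real.exp ξ)⁻¹ := by
        rw [← Real.exp_neg, ← Real.exp_add]; congr 1; push_cast; ring
      have hE2 : Real.exp (-(((n+2:ℕ):ℝ)+1/2)*ξ)
          = Real.exp (-((n:ℝ)+1/2)*ξ) * (Real.exp ξ)⁻¹ * (Real.exp ξ)⁻¹ := by
        rw [← Real.exp_neg, ← Real.exp_add, ← Real.exp_add]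
        congr 1; push_cast; ring
      rw [Jrec hc n, ih1, ih2, hE2, hE1, Real.cosh_eq, Real.exp_neg]
      set T := Real.exp (-((n:ℝ)+1/2)*ξ) with hT
      set E := Real.exp ξ with hEdef
      have h1 : E ≠ 0 := ne_of_gt hE
      have h3 : Real.sinh ξ ≠ 0 := ne_of_gt hS
      field_simp
      ring

lemma Ival (ξ : ℝ) (hξ : 0 < ξ) (n : ℕ) :
    II (Real.cosh ξ) n = 2 * Real.sqrt 2 / (2*(n:ℝ)+1) * Real.exp (-((n:ℝ)+1/2)*ξ) := by
  have hc : 1 < Real.cosh ξ := by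
    rw [Real.one_lt_cosh]; exact ne_of_gt hξ
  have hexp : Real.exp (-(ξ/2)) = Real.cosh (ξ/2) - Real.sinh (ξ/2) :=
    (Real.cosh_sub_sinh (ξ/2)).symm
  have hS : 0 < Real.sinh ξ := by rw [Real.sinh_pos_iff]; exact hξ
  match n with
  | 0 =>
      have e : (fun s => (P 0).eval s * w (Real.cosh ξ) s) = w (Real.cosh ξ) := by
        funext s; simp [P_zero]
      unfold II
      rw [e, int_w hc, sqrt_c_add ξ hξ, sqrt_c_sub ξ hξ,
        show -(((0:ℕ):ℝ)+1/2)*ξ = -(ξ/2) by push_cast; ring, hexp]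
      push_cast
      ring
  | (n+1) =>
      have hd := diamond hc n
      rw [Jval ξ hξ n, Jval ξ hξ (n+2)] at hd
      have hne : (2*(n:ℝ)+3) ≠ 0 := by positivity
      have hE : (0:ℝ) < Real.exp ξ := Real.exp_pos ξ
      have hE1 : Real.exp (-(((n+1:ℕ):ℝ)+1/2)*ξ)
          = Real.exp (-((n:ℝ)+1/2)*ξ) * (Real.exp ξ)⁻¹ := by
        rw [← Real.exp_neg, ← Real.exp_add]; congr 1; push_cast; ring
      have hE2 : Real.exp (-(((n+2:ℕ):ℝ)+1/2)*ξ)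
          = Real.exp (-((n:ℝ)+1/2)*ξ) * (Real.exp ξ)⁻¹ * (Real.exp ξ)⁻¹ := by
        rw [← Real.exp_neg, ← Real.exp_add, ← Real.exp_add]
        congr 1; push_cast; ring
      rw [hE2] at hd
      refine mul_left_cancel₀ hne ?_
      rw [hd, hE1]
      have hSeq : Real.sinh ξ * 2 = Real.exp ξ - (Real.exp ξ)⁻¹ := by
        rw [Real.sinh_eq, Real.exp_neg]; ring
      set T := Real.exp (-((n:ℝ)+1/2)*ξ) with hT
      set E := Real.exp ξ with hEdef
      have h1 : E ≠ 0 := ne_of_gt hE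
      have h3 : Real.sinh ξ ≠ 0 := ne_of_gt hS
      have hcast : (2*(((n:ℝ))+1)+1) = 2*(n:ℝ)+3 := by ring
      push_cast
      rw [hcast]
      have hEF : E * E⁻¹ = 1 := mul_inv_cancel₀ h1
      field_simp
      linear_combination (-T*E) * hSeq
        + (T) * hEF

lemma iterD_eval (p : ℝ[X]) (k : ℕ) :
    iteratedDeriv k (fun x : ℝ => p.eval x) = fun x => (derivative^[k] p).eval x := by
  induction k with
  | zero => simp
  | succ k ih =>
      rw [iteratedDeriv_succ, ih, Function.iterate_succ_apply']
      funext x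
      exact Polynomial.deriv _

lemma legendreP_eq (n : ℕ) (s : ℝ) : legendreP n s = (P n).eval s := by
  unfold legendreP P
  have e : (fun x : ℝ => (x^2 - 1)^n) = fun x => (((X:ℝ[X])^2 - 1)^n).eval x := by
    funext x; simp
  rw [e, iterD_eval]
  simp [one_div]

end LegAux

theorem legendre_integral_sqrt (n : ℕ) (ξ : ℝ) (hξ : 0 < ξ) :
    ∫ s in (-1 : ℝ)..1, legendreP n s / Real.sqrt (Real.cosh ξ - s) =
      2 * Real.sqrt 2 / (2 * n + 1) * Real.exp (-(n + 1 / 2) * ξ) := by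
  have h : (fun s => legendreP n s / Real.sqrt (Real.cosh ξ - s))
      = fun s => (LegAux.P n).eval s * LegAux.w (Real.cosh ξ) s := by
    funext s
    rw [LegAux.legendreP_eq, div_eq_mul_inv]
    rfl
  rw [h]
  have hI := LegAux.Ival ξ hξ n
  unfold LegAux.II at hI
  rw [hI]
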